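/- Let ℓ, m, n be positive integers. Then 2^{mℓ + n(ℓ+m+n)} = 2^{n² + ℓ(m+n)} + Σ_{i=1}^{n} CT(ℓ,m,i) · ∏_{j=0}^{i−1}(2^n − 2^j) · 2^{(n+ℓ)(n−i)}, where CT(ℓ,m,i) denotes the number of canonical linear finite transducers over F_2 with structural parameters ℓ, m, i. (Equivalently, the total number of LFTs over F_2 with parameters ℓ, m, n is the number of trivial ones plus, for each i ≤ n, the number of LFTs of size n equivalent to each of the CT(ℓ,m,i) canonical LFTs of size i.) -/

import Mathlib

/-- Extension of the state transition function of a finite transducer to finite words. -/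
def deltaStar {X S : Type*} (δ : S → X → S) : S → List X → S
  | s, [] => s
  | s, a :: w => deltaStar δ (δ s a) w

/-- Extension of the output function of a finite transducer to finite words. -/
def lambdaStar {X Y S : Type*} (δ : S → X → S) (lam : S → X → Y) : S → List X → List Y
  | _, [] => []
  | s, a :: w => lam s a :: lambdaStar δ lam (δ s a) w

/-- A linear finite transducer over `F` with structural parameters `ℓ, m, n`, identified
with its quadruple of structural matrices `(A, B, C, D)`; its input alphabet is `F^ℓ`,
its output alphabet is `F^m` and its state space is `F^n`. -/
structure LFT (F : Type) [Field F] (ℓ m n : ℕ) where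
  A : Matrix (Fin n) (Fin n) F
  B : Matrix (Fin n) (Fin ℓ) F
  C : Matrix (Fin m) (Fin n) F
  D : Matrix (Fin m) (Fin ℓ) F

namespace LFT

variable {F : Type} [Field F] {ℓ m n n₁ n₂ : ℕ}

/-- The state transition function `δ(s, x) = As + Bx` of a linear finite transducer. -/
def del (M : LFT F ℓ m n) (s : Fin n → F) (x : Fin ℓ → F) : Fin n → F :=
  M.A.mulVec s + M.B.mulVec x

/-- The output function `λ(s, x) = Cs + Dx` of a linear finite transducer. -/
def out (M : LFT F ℓ m n) (s : Fin n → F) (x : Fin ℓ → F) : Fin m → F :=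
  M.C.mulVec s + M.D.mulVec x

/-- Two states are equivalent when the transducers produce the same output word from them
on every finite input word. -/
def StateEquiv (M₁ : LFT F ℓ m n₁) (M₂ : LFT F ℓ m n₂)
    (s₁ : Fin n₁ → F) (s₂ : Fin n₂ → F) : Prop :=
  ∀ α : List (Fin ℓ → F), lambdaStar M₁.del M₁.out s₁ α = lambdaStar M₂.del M₂.out s₂ α

/-- Two linear finite transducers are equivalent if every state of each one is equivalent
to some state of the other. -/
def Equiv (M₁ : LFT F ℓ m n₁) (M₂ : LFT F ℓ m n₂) : Prop :=
  (∀ s₁, ∃ s₂, StateEquiv M₁ M₂ s₁ s₂) ∧ (∀ s₂, ∃ s₁, StateEquiv M₁ M₂ s₁ s₂)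

/-- A linear finite transducer is minimal if it has no pair of distinct equivalent states. -/
def Minimal (M : LFT F ℓ m n) : Prop :=
  ∀ s s' : Fin n → F, StateEquiv M M s s' → s = s'

/-- The diagnostic matrix `Δ_M = [C; CA; …; CA^{n−1}]` of a linear finite transducer,
with the `mn` rows indexed by `Fin (n * m)` (row `i` is row `i % m` of `C * A ^ (i / m)`). -/
def diagMat (M : LFT F ℓ m n) : Matrix (Fin (n * m)) (Fin n) F :=
  Matrix.of fun i j =>
    (M.C * M.A ^ ((i : ℕ) / m))
      ⟨(i : ℕ) % m, Nat.mod_lt _ (Nat.pos_of_ne_zero fun h => by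
        have hpos : 0 < n * m := Nat.lt_of_le_of_lt (Nat.zero_le _) i.isLt
        rw [h, Nat.mul_zero] at hpos
        exact absurd hpos (lt_irrefl 0))⟩ j

end LFT

/-- A family of `k` vectors in `F^N` is in reduced row echelon form if there are strictly
increasing pivot positions where each vector has a leading `1` (with zeros in that
coordinate for the other vectors) and zeros before its pivot. -/
def IsRREF {F : Type} [Field F] {k N : ℕ} (b : Fin k → Fin N → F) : Prop :=
  ∃ p : Fin k → Fin N, StrictMono p ∧
    (∀ i i' : Fin k, b i' (p i) = if i' = i then 1 else 0) ∧
    ∀ (i : Fin k) (c : Fin N), (c : ℕ) < (p i : ℕ) → b i c = 0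

/-- A linear finite transducer of size `n` is canonical if the columns
`Δ_M e₁, …, Δ_M eₙ` of its diagnostic matrix form the standard basis (the reduced row
echelon form basis) of the column space `{Δ_M s ∣ s}` of `Δ_M`: they are linearly
independent (hence a basis of the column space, which they always span) and in RREF. -/
def LFT.IsCanonical {F : Type} [Field F] {ℓ m n : ℕ} (M : LFT F ℓ m n) : Prop :=
  LinearIndependent F (fun j : Fin n => fun r : Fin (n * m) => M.diagMat r j) ∧
    IsRREF (fun j : Fin n => fun r : Fin (n * m) => M.diagMat r j)

/-- The number of canonical linear finite transducers over `F₂` with structural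
parameters `ℓ, m, i`. -/
noncomputable def CT (ℓ m i : ℕ) : ℕ :=
  Nat.card {M : LFT (ZMod 2) ℓ m i // M.IsCanonical}


/-! ### Auxiliary development -/

section RREF

variable {F : Type} [Field F] {k N : ℕ}

/-- `IsRREF` with a specified pivot function. -/
def IsRREFwith (p : Fin k → Fin N) (b : Fin k → Fin N → F) : Prop :=
  StrictMono p ∧
    (∀ i i' : Fin k, b i' (p i) = if i' = i then 1 else 0) ∧
    ∀ (i : Fin k) (c : Fin N), (c : ℕ) < (p i : ℕ) → b i c = 0

lemma isRREF_iff {b : Fin k → Fin N → F} : IsRREF b ↔ ∃ p, IsRREFwith p b := Iff.rfl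

lemma IsRREFwith.linearIndependent {p : Fin k → Fin N} {b : Fin k → Fin N → F}
    (h : IsRREFwith p b) : LinearIndependent F b := by
  rw [Fintype.linearIndependent_iff]
  intro g hg i
  have h0 := congrFun hg (p i)
  simp only [Finset.sum_apply, Pi.smul_apply, smul_eq_mul, h.2.1, mul_ite, mul_one, mul_zero,
    Finset.sum_ite_eq', Finset.mem_univ, if_true, Pi.zero_apply] at h0
  exact h0

lemma IsRREFwith.expand {p : Fin k → Fin N} {b : Fin k → Fin N → F}
    (h : IsRREFwith p b) {v : Fin N → F}
    (hv : v ∈ Submodule.span F (Set.range b)) : v = ∑ j, v (p j) • b j := by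
  obtain ⟨c, hc⟩ := (Submodule.mem_span_range_iff_exists_fun (R := F)).1 hv
  have hco : ∀ j, v (p j) = c j := by
    intro j
    rw [← hc]
    simp only [Finset.sum_apply, Pi.smul_apply, smul_eq_mul, h.2.1, mul_ite, mul_one, mul_zero,
      Finset.sum_ite_eq', Finset.mem_univ, if_true]
  simp_rw [hco]
  exact hc.symm

lemma IsRREFwith.pivot_mem {p : Fin k → Fin N} {b : Fin k → Fin N → F}
    (h : IsRREFwith p b) {q : Fin k → Fin N} {b' : Fin k → Fin N → F}
    (h' : IsRREFwith q b')
    (hspan : Submodule.span F (Set.range b') ≤ Submodule.span F (Set.range b)) (i : Fin k) :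
    q i ∈ Finset.image p Finset.univ := by
  classical
  have hbi : b' i ∈ Submodule.span F (Set.range b) :=
    hspan (Submodule.subset_span (Set.mem_range_self i))
  have hexp := h.expand hbi
  set s : Finset (Fin k) := Finset.univ.filter (fun j => b' i (p j) ≠ 0) with hs
  have hsne : s.Nonempty := by
    by_contra hemp
    rw [Finset.not_nonempty_iff_eq_empty] at hemp
    have : b' i = 0 := by
      rw [hexp]
      apply Finset.sum_eq_zero
      intro j _
      have : b' i (p j) = 0 := by
        by_contra hne
        have : j ∈ s := by simp [hs, hne]
        rw [hemp] at this
        exact absurd this (Finset.notMem_empty j)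
      rw [this, zero_smul]
    have h1 : b' i (q i) = 1 := by rw [h'.2.1 i i]; simp
    rw [this] at h1
    simp at h1
  set j₀ := s.min' hsne with hj₀
  have hj₀mem : j₀ ∈ s := s.min'_mem hsne
  have hj₀ne : b' i (p j₀) ≠ 0 := by
    have := hj₀mem
    simp [hs] at this
    exact this
  -- q i ≤ p j₀
  have hle1 : q i ≤ p j₀ := by
    by_contra hlt
    push_neg at hlt
    exact hj₀ne (h'.2.2 i (p j₀) hlt)
  -- p j₀ ≤ q i
  have hle2 : p j₀ ≤ q i := by
    by_contra hlt
    push_neg at hlt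
    have h1 : b' i (q i) = 1 := by rw [h'.2.1 i i]; simp
    have h0 : b' i (q i) = 0 := by
      conv_lhs => rw [hexp]
      rw [Finset.sum_apply]
      apply Finset.sum_eq_zero
      intro j _
      by_cases hjs : j ∈ s
      · have hj₀le : j₀ ≤ j := s.min'_le j hjs
        have : (q i : ℕ) < (p j : ℕ) := lt_of_lt_of_le hlt (h.1.monotone hj₀le)
        rw [Pi.smul_apply, h.2.2 j (q i) this, smul_zero]
      · have : b' i (p j) = 0 := by
          by_contra hne
          exact hjs (by simp [hs, hne])
        rw [Pi.smul_apply, this, zero_smul]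
    rw [h1] at h0
    simp at h0
  have : q i = p j₀ := le_antisymm hle1 hle2
  rw [this]
  exact Finset.mem_image_of_mem p (Finset.mem_univ j₀)

lemma rref_unique {p q : Fin k → Fin N} {b b' : Fin k → Fin N → F}
    (h : IsRREFwith p b) (h' : IsRREFwith q b')
    (hspan : Submodule.span F (Set.range b) = Submodule.span F (Set.range b')) :
    p = q ∧ b = b' := by
  classical
  have hcardp : (Finset.image p Finset.univ).card = k := by
    rw [Finset.card_image_of_injective _ h.1.injective, Finset.card_univ, Fintype.card_fin]
  have hqmem : ∀ i, q i ∈ Finset.image p Finset.univ :=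
    h.pivot_mem h' hspan.ge
  have hpmem : ∀ i, p i ∈ Finset.image p Finset.univ := fun i =>
    Finset.mem_image_of_mem p (Finset.mem_univ i)
  have hp := Finset.orderEmbOfFin_unique hcardp hpmem h.1
  have hq := Finset.orderEmbOfFin_unique hcardp hqmem h'.1
  have hpq : p = q := by rw [hp, hq]
  refine ⟨hpq, ?_⟩
  funext i
  have hbi : b' i ∈ Submodule.span F (Set.range b) := by
    rw [hspan]
    exact Submodule.subset_span (Set.mem_range_self i)
  have hexp := h.expand hbi
  rw [hexp]
  have hco : ∀ j, b' i (p j) = if i = j then 1 else 0 := by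
    intro j
    rw [hpq]
    exact h'.2.1 j i
  simp_rw [hco]
  simp [ite_smul, one_smul, zero_smul, Finset.sum_ite_eq]

lemma rref_exists (N : ℕ) :
    ∀ (k : ℕ) (V : Submodule F (Fin N → F)), Module.finrank F V = k →
    ∃ (p : Fin k → Fin N) (b : Fin k → Fin N → F),
      IsRREFwith p b ∧ Submodule.span F (Set.range b) = V := by
  intro k
  induction k with
  | zero =>
    intro V hV
    refine ⟨fun i => i.elim0, fun i => i.elim0, ⟨fun i => i.elim0, fun i => i.elim0,
      fun i => i.elim0⟩, ?_⟩
    have : V = ⊥ := Submodule.finrank_eq_zero.1 hV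
    rw [this]
    have : Set.range (fun i : Fin 0 => (i.elim0 : Fin N → F)) = ∅ := by
      simp [Set.range_eq_empty]
    rw [this, Submodule.span_empty]
  | succ k ih =>
    intro V hV
    classical
    -- there is a nonzero vector in V
    have hVne : V ≠ ⊥ := by
      intro hbot
      rw [hbot, finrank_bot] at hV
      omega
    obtain ⟨v₀, hv₀V, hv₀ne⟩ := Submodule.exists_mem_ne_zero_of_ne_bot hVne
    -- the set of coordinates where some element of V is nonzero
    set s0 : Finset (Fin N) := Finset.univ.filter (fun c => ∃ v ∈ V, v c ≠ 0) with hs0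
    have hs0ne : s0.Nonempty := by
      have : ∃ c, v₀ c ≠ 0 := by
        by_contra hc
        push_neg at hc
        exact hv₀ne (funext hc)
      obtain ⟨c, hc⟩ := this
      exact ⟨c, by simp [hs0]; exact ⟨v₀, hv₀V, hc⟩⟩
    set c₀ := s0.min' hs0ne with hc₀
    have hmin : ∀ v ∈ V, ∀ c : Fin N, (c : ℕ) < (c₀ : ℕ) → v c = 0 := by
      intro v hv c hc
      by_contra hne
      have hcs : c ∈ s0 := by simp [hs0]; exact ⟨v, hv, hne⟩
      have := s0.min'_le c hcs
      rw [← hc₀] at this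
      exact absurd hc (not_lt.2 this)
    have hc₀s : c₀ ∈ s0 := s0.min'_mem hs0ne
    obtain ⟨w₀, hw₀V, hw₀ne⟩ : ∃ v ∈ V, v c₀ ≠ 0 := by
      have := hc₀s
      simp [hs0] at this
      exact this
    set u : Fin N → F := (w₀ c₀)⁻¹ • w₀ with hu
    have huV : u ∈ V := V.smul_mem _ hw₀V
    have huc₀ : u c₀ = 1 := by
      simp [hu, inv_mul_cancel₀ hw₀ne]
    -- the hyperplane of V of vectors vanishing at c₀
    set φ : V →ₗ[F] F := (LinearMap.proj c₀).comp V.subtype with hφ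
    set W : Submodule F (Fin N → F) := (LinearMap.ker φ).map V.subtype with hW
    have hmemW : ∀ x, x ∈ W ↔ x ∈ V ∧ x c₀ = 0 := by
      intro x
      constructor
      · rintro ⟨y, hy, rfl⟩
        exact ⟨y.2, hy⟩
      · rintro ⟨hxV, hxc⟩
        exact ⟨⟨x, hxV⟩, hxc, rfl⟩
    have hWV : W ≤ V := by
      intro x hx
      exact ((hmemW x).1 hx).1
    have hφsurj : Function.Surjective φ := by
      intro a
      refine ⟨a • ⟨u, huV⟩, ?_⟩
      simp [hφ, huc₀]
    have hfrW : Module.finrank F W = k := by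
      have hrn := LinearMap.finrank_range_add_finrank_ker φ
      have hrange : LinearMap.range φ = ⊤ := LinearMap.range_eq_top.2 hφsurj
      rw [hrange, hV] at hrn
      have h1 : Module.finrank F (⊤ : Submodule F F) = 1 := by
        rw [finrank_top]
        exact Module.finrank_self F
      rw [h1] at hrn
      have hker : Module.finrank F (LinearMap.ker φ) = k := by omega
      rw [hW]
      rw [Submodule.finrank_map_subtype_eq]
      exact hker
    obtain ⟨p', b', hb', hspan'⟩ := ih W hfrW
    -- facts about the members of W
    have hb'W : ∀ j, b' j ∈ W := by
      intro j
      rw [← hspan']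
      exact Submodule.subset_span (Set.mem_range_self j)
    have hb'V : ∀ j, b' j ∈ V := fun j => hWV (hb'W j)
    have hb'c₀ : ∀ j, b' j c₀ = 0 := fun j => ((hmemW _).1 (hb'W j)).2
    have hpiv : ∀ j, (c₀ : ℕ) < (p' j : ℕ) := by
      intro j
      rcases lt_trichotomy ((p' j : ℕ)) ((c₀ : ℕ)) with h | h | h
      · exact absurd (hmin _ (hb'V j) (p' j) h) (by
          rw [hb'.2.1 j j]
          simp)
      · exact absurd (hb'c₀ j) (by
          have : p' j = c₀ := Fin.ext h
          rw [← this, hb'.2.1 j j]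
          simp)
      · exact h
    set b0 : Fin N → F := u - ∑ j, u (p' j) • b' j with hb0
    have hb0V : b0 ∈ V := by
      apply V.sub_mem huV
      apply Submodule.sum_mem
      intro j _
      exact V.smul_mem _ (hb'V j)
    have hb0c₀ : b0 c₀ = 1 := by
      simp only [hb0, Pi.sub_apply, Finset.sum_apply, Pi.smul_apply, smul_eq_mul]
      rw [huc₀]
      have : ∀ j ∈ Finset.univ, u (p' j) * b' j c₀ = 0 := by
        intro j _
        rw [hb'c₀ j, mul_zero]
      rw [Finset.sum_congr rfl this]
      simp
    have hb0p : ∀ j, b0 (p' j) = 0 := by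
      intro j
      simp only [hb0, Pi.sub_apply, Finset.sum_apply, Pi.smul_apply, smul_eq_mul]
      have : ∀ j', u (p' j') * b' j' (p' j) = if j' = j then u (p' j) else 0 := by
        intro j'
        rw [hb'.2.1 j j']
        by_cases h : j' = j
        · simp [h]
        · simp [h]
      rw [Finset.sum_congr rfl (fun j' _ => this j')]
      simp
    have hb0lt : ∀ c : Fin N, (c : ℕ) < (c₀ : ℕ) → b0 c = 0 := by
      intro c hc
      simp only [hb0, Pi.sub_apply, Finset.sum_apply, Pi.smul_apply, smul_eq_mul]
      rw [hmin u huV c hc]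
      have : ∀ j ∈ Finset.univ, u (p' j) * b' j c = 0 := by
        intro j _
        rw [hmin _ (hb'V j) c hc, mul_zero]
      rw [Finset.sum_congr rfl this]
      simp
    refine ⟨Fin.cons c₀ p', Fin.cons b0 b', ⟨?_, ?_, ?_⟩, ?_⟩
    · -- StrictMono
      intro a
      refine Fin.cases ?_ ?_ a
      · intro b
        refine Fin.cases ?_ ?_ b
        · intro h
          exact absurd h (lt_irrefl _)
        · intro j _
          rw [Fin.cons_zero, Fin.cons_succ]
          exact Fin.lt_def.2 (hpiv j)
      · intro j b
        refine Fin.cases ?_ ?_ b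
        · intro h
          exact absurd h (Fin.not_lt_zero _)
        · intro j' h
          rw [Fin.cons_succ, Fin.cons_succ]
          exact hb'.1 (Fin.succ_lt_succ_iff.1 h)
    · -- pivot values
      intro i i'
      refine Fin.cases ?_ ?_ i
      · rw [Fin.cons_zero]
        refine Fin.cases ?_ ?_ i'
        · rw [Fin.cons_zero, hb0c₀]
          simp
        · intro j'
          rw [Fin.cons_succ, hb'c₀ j']
          have : Fin.succ j' ≠ 0 := Fin.succ_ne_zero j'
          simp [this]
      · intro j
        rw [Fin.cons_succ]
        refine Fin.cases ?_ ?_ i'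
        · rw [Fin.cons_zero, hb0p j]
          have : (0 : Fin (k+1)) ≠ Fin.succ j := (Fin.succ_ne_zero j).symm
          simp [this]
        · intro j'
          rw [Fin.cons_succ, hb'.2.1 j j']
          by_cases h : j' = j
          · simp [h]
          · have : Fin.succ j' ≠ Fin.succ j := fun hc => h (Fin.succ_injective _ hc)
            simp [h, this]
    · -- zeros before pivots
      intro i c
      refine Fin.cases ?_ ?_ i
      · rw [Fin.cons_zero, Fin.cons_zero]
        exact hb0lt c
      · intro j
        rw [Fin.cons_succ, Fin.cons_succ]
        exact hb'.2.2 j c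
    · -- span
      rw [Fin.range_cons, Submodule.span_insert]
      apply le_antisymm
      · apply sup_le
        · rw [Submodule.span_singleton_le_iff_mem]
          exact hb0V
        · rw [hspan']
          exact hWV
      · intro v hv
        have hsub : v - v c₀ • b0 ∈ W := by
          rw [hmemW]
          constructor
          · exact V.sub_mem hv (V.smul_mem _ hb0V)
          · simp [hb0c₀]
        have h1 : v - v c₀ • b0 ∈ Submodule.span F (Set.range b') := by
          rw [hspan']
          exact hsub
        have h2 : v c₀ • b0 ∈ Submodule.span F {b0} :=
          Submodule.smul_mem _ _ (Submodule.mem_span_singleton_self b0)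
        have := Submodule.add_mem _ (Submodule.mem_sup_left h2) (Submodule.mem_sup_right h1)
        simpa using this

end RREF


section LFTaux

namespace LFT

variable {F : Type} [Field F] {ℓ m n : ℕ}

/-- An LFT is just a quadruple of matrices. -/
def equivProd : LFT F ℓ m n ≃
    Matrix (Fin n) (Fin n) F × Matrix (Fin n) (Fin ℓ) F ×
      Matrix (Fin m) (Fin n) F × Matrix (Fin m) (Fin ℓ) F where
  toFun M := (M.A, M.B, M.C, M.D)
  invFun x := ⟨x.1, x.2.1, x.2.2.1, x.2.2.2⟩
  left_inv := fun ⟨_, _, _, _⟩ => rfl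
  right_inv := fun _ => rfl

lemma ext2 {M N : LFT F ℓ m n} (hA : M.A = N.A) (hB : M.B = N.B)
    (hC : M.C = N.C) (hD : M.D = N.D) : M = N := by
  cases M; cases N; simp_all

instance : Finite (LFT (ZMod 2) ℓ m n) := Finite.of_equiv _ equivProd.symm

lemma finrank_pi_n (a : ℕ) : Module.finrank F (Fin a → F) = a := by
  rw [Module.finrank_pi, Fintype.card_fin]

/-- The unobservable subspaces. -/
def Nsub (M : LFT F ℓ m n) (i : ℕ) : Submodule F (Fin n → F) where
  carrier := {s | ∀ k < i, (M.C * M.A ^ k).mulVec s = 0}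
  add_mem' := by
    intro a b ha hb k hk
    rw [Matrix.mulVec_add, ha k hk, hb k hk, add_zero]
  zero_mem' := by
    intro k hk
    rw [Matrix.mulVec_zero]
  smul_mem' := by
    intro c a ha k hk
    rw [Matrix.mulVec_smul, ha k hk, smul_zero]

lemma mem_Nsub {M : LFT F ℓ m n} {i : ℕ} {s : Fin n → F} :
    s ∈ Nsub M i ↔ ∀ k < i, (M.C * M.A ^ k).mulVec s = 0 := Iff.rfl

lemma Nsub_antitone (M : LFT F ℓ m n) {i j : ℕ} (h : i ≤ j) : Nsub M j ≤ Nsub M i :=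
  fun _ hs k hk => hs k (lt_of_lt_of_le hk h)

lemma Nsub_shift {M : LFT F ℓ m n} {i : ℕ} {s : Fin n → F} (hs : s ∈ Nsub M (i + 1)) :
    M.A.mulVec s ∈ Nsub M i := by
  intro k hk
  rw [Matrix.mulVec_mulVec]
  have h : M.C * M.A ^ k * M.A = M.C * M.A ^ (k + 1) := by
    rw [pow_succ, Matrix.mul_assoc]
  rw [h]
  exact hs (k + 1) (by omega)

lemma Nsub_stab {M : LFT F ℓ m n} {j : ℕ} (hstab : Nsub M (j + 1) = Nsub M j) :
    ∀ k, j ≤ k → Nsub M k = Nsub M j := by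
  intro k hk
  induction k with
  | zero =>
    cases Nat.le_zero.1 hk
    rfl
  | succ k ih =>
    rcases Nat.lt_or_ge k j with h | h
    · have hj : j = k + 1 := by omega
      rw [hj]
    · have hNk := ih h
      apply le_antisymm (Nsub_antitone M (by omega))
      intro s hs
      have hs1 : s ∈ Nsub M (j + 1) := by rw [hstab]; exact hs
      intro t ht
      cases t with
      | zero => exact hs1 0 (by omega)
      | succ t =>
        have hA : M.A.mulVec s ∈ Nsub M k := by
          rw [hNk]
          exact Nsub_shift hs1
        have h2 := hA t (by omega)
        rw [Matrix.mulVec_mulVec] at h2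
        have h3 : M.C * M.A ^ t * M.A = M.C * M.A ^ (t + 1) := by
          rw [pow_succ, Matrix.mul_assoc]
        rwa [h3] at h2

lemma Nsub_main (M : LFT F ℓ m n) :
    ∀ k, (∃ j, j ≤ k ∧ Nsub M (j + 1) = Nsub M j) ∨
      Module.finrank F (Nsub M k) + k ≤ n := by
  intro k
  induction k with
  | zero =>
    right
    have h := Submodule.finrank_le (Nsub M 0)
    rw [finrank_pi_n] at h
    omega
  | succ k ih =>
    rcases ih with ⟨j, hj, hstab⟩ | hdim
    · exact Or.inl ⟨j, by omega, hstab⟩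
    · by_cases heq : Nsub M (k + 1) = Nsub M k
      · exact Or.inl ⟨k, by omega, heq⟩
      · right
        have hlt : Nsub M (k + 1) < Nsub M k :=
          lt_of_le_of_ne (Nsub_antitone M (by omega)) heq
        have := Submodule.finrank_lt_finrank_of_lt hlt
        omega

lemma Nsub_inv (M : LFT F ℓ m n) {s : Fin n → F} (hs : s ∈ Nsub M n) :
    M.A.mulVec s ∈ Nsub M n := by
  rcases Nsub_main M n with ⟨j, hj, hstab⟩ | hdim
  · have h1 : Nsub M (n + 1) = Nsub M j := Nsub_stab hstab (n + 1) (by omega)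
    have h2 : Nsub M n = Nsub M j := Nsub_stab hstab n hj
    have hs1 : s ∈ Nsub M (n + 1) := by
      rw [h1, ← h2]
      exact hs
    exact Nsub_shift hs1
  · have h0 : Module.finrank F (Nsub M n) = 0 := by omega
    have hbot : Nsub M n = ⊥ := Submodule.finrank_eq_zero.1 h0
    rw [hbot] at hs ⊢
    rw [Submodule.mem_bot] at hs ⊢
    rw [hs, Matrix.mulVec_zero]

/-- Truncated diagnostic matrix (first `i` blocks). -/
def tdiag (M : LFT F ℓ m n) (i : ℕ) : Matrix (Fin (i * m)) (Fin n) F :=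
  Matrix.of fun r j =>
    (M.C * M.A ^ ((r : ℕ) / m))
      ⟨(r : ℕ) % m, Nat.mod_lt _ (Nat.pos_of_ne_zero fun h => by
        have hpos : 0 < i * m := Nat.lt_of_le_of_lt (Nat.zero_le _) r.isLt
        rw [h, Nat.mul_zero] at hpos
        exact absurd hpos (lt_irrefl 0))⟩ j

lemma tdiag_n (M : LFT F ℓ m n) : M.diagMat = tdiag M n := rfl

lemma matrow_congr {m' n' : ℕ} (X : ℕ → Matrix (Fin m') (Fin n') F) {a b : ℕ} (h : a = b)
    (r r' : Fin m') (hr : (r : ℕ) = (r' : ℕ)) (s : Fin n' → F) :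
    (X a).mulVec s r = (X b).mulVec s r' := by
  subst h
  have hrr : r = r' := Fin.ext hr
  rw [hrr]

lemma tdiag_apply' (hm : 0 < m) (M : LFT F ℓ m n) (i : ℕ) (s : Fin n → F) (x : Fin (i * m)) :
    (tdiag M i).mulVec s x =
      (M.C * M.A ^ ((x : ℕ) / m)).mulVec s ⟨(x : ℕ) % m, Nat.mod_lt _ hm⟩ := rfl

lemma tdiag_mulVec_eq_zero_iff (hm : 0 < m) {M : LFT F ℓ m n} {i : ℕ} (s : Fin n → F) :
    (tdiag M i).mulVec s = 0 ↔ s ∈ Nsub M i := by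
  constructor
  · intro h k hk
    funext r
    have h4 : (k + 1) * m = k * m + m := by ring
    have hlt : (r : ℕ) + k * m < i * m := by
      have h1 : (r : ℕ) < m := r.isLt
      have h2 : (k + 1) * m ≤ i * m := Nat.mul_le_mul_right m (by omega)
      omega
    have hval := congrFun h ⟨(r : ℕ) + k * m, hlt⟩
    rw [tdiag_apply' hm] at hval
    have hdiv : ((r : ℕ) + k * m) / m = k := by
      rw [Nat.add_mul_div_right _ _ hm, Nat.div_eq_of_lt r.isLt, Nat.zero_add]
    have hmod : ((r : ℕ) + k * m) % m = (r : ℕ) := by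
      rw [Nat.add_mul_mod_self_right, Nat.mod_eq_of_lt r.isLt]
    have hfin := (matrow_congr (fun t => M.C * M.A ^ t) hdiv _ r hmod s).symm.trans hval
    simpa using hfin
  · intro h
    funext x
    rw [tdiag_apply' hm]
    have hk : (x : ℕ) / m < i := by
      rw [Nat.div_lt_iff_lt_mul hm]
      exact x.isLt
    rw [h _ hk]
    rfl

lemma ker_tdiag (hm : 0 < m) (M : LFT F ℓ m n) (i : ℕ) :
    LinearMap.ker (tdiag M i).mulVecLin = Nsub M i := by
  ext s
  rw [LinearMap.mem_ker, Matrix.mulVecLin_apply]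
  exact tdiag_mulVec_eq_zero_iff hm s

/-- The rank of the diagnostic matrix. -/
noncomputable def rk (M : LFT F ℓ m n) : ℕ :=
  Module.finrank F (LinearMap.range M.diagMat.mulVecLin)

lemma rk_add (hm : 0 < m) (M : LFT F ℓ m n) :
    rk M + Module.finrank F (Nsub M n) = n := by
  have h := LinearMap.finrank_range_add_finrank_ker M.diagMat.mulVecLin
  rw [finrank_pi_n] at h
  rw [tdiag_n, ker_tdiag hm] at h
  exact h

lemma rk_le (hm : 0 < m) (M : LFT F ℓ m n) : rk M ≤ n := by
  have := rk_add hm M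
  omega

lemma Nsub_rk (hm : 0 < m) (M : LFT F ℓ m n) : Nsub M (rk M) = Nsub M n := by
  rcases Nsub_main M (rk M) with ⟨j, hj, hstab⟩ | hdim
  · have hjn : j ≤ n := le_trans hj (rk_le hm M)
    rw [Nsub_stab hstab _ hj, Nsub_stab hstab n hjn]
  · have h1 := rk_add hm M
    have h2 : Module.finrank F (Nsub M (rk M)) ≤ Module.finrank F (Nsub M n) := by omega
    exact (Submodule.eq_of_le_of_finrank_le (Nsub_antitone M (rk_le hm M)) h2).symm

end LFT

section MatrixAux

open Matrix

variable {F : Type} [Field F]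

lemma matrix_ext_mulVec {a b : ℕ} {X Y : Matrix (Fin a) (Fin b) F}
    (h : ∀ v, X.mulVec v = Y.mulVec v) : X = Y := by
  ext r c
  have h2 := congrFun (h (Pi.single c 1)) r
  rw [Matrix.mulVec_single_one, Matrix.mulVec_single_one] at h2
  exact h2

lemma surj_of_rows_indep {i a : ℕ} {T : Matrix (Fin i) (Fin a) F}
    (h : LinearIndependent F (fun r => T r)) : Function.Surjective T.mulVecLin := by
  have h1 : Tᵀ.rank = i := by
    rw [Matrix.rank, Matrix.range_mulVecLin, Matrix.col_transpose]
    exact (finrank_span_eq_card h).trans (Fintype.card_fin _)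
  have h2 : T.rank = i := (Matrix.rank_transpose T).symm.trans h1
  rw [← LinearMap.range_eq_top]
  apply Submodule.eq_top_of_finrank_eq
  rw [LFT.finrank_pi_n]
  exact h2

lemma exists_rightInverse {i a : ℕ} {T : Matrix (Fin i) (Fin a) F}
    (h : Function.Surjective T.mulVecLin) : ∃ R : Matrix (Fin a) (Fin i) F, T * R = 1 := by
  obtain ⟨g, hg⟩ := T.mulVecLin.exists_rightInverse_of_surjective (LinearMap.range_eq_top.2 h)
  refine ⟨LinearMap.toMatrix' g, ?_⟩
  have hinj : Function.Injective (Matrix.mulVecLin :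
      Matrix (Fin i) (Fin i) F → ((Fin i → F) →ₗ[F] Fin i → F)) := by
    intro X Y hXY
    have := congrArg LinearMap.toMatrix' hXY
    rwa [← Matrix.toLin'_apply', ← Matrix.toLin'_apply', LinearMap.toMatrix'_toLin',
      LinearMap.toMatrix'_toLin'] at this
  apply hinj
  rw [Matrix.mulVecLin_mul, Matrix.mulVecLin_one]
  rw [show (LinearMap.toMatrix' g).mulVecLin = g from
    congrArg (fun e => e) (Matrix.toLin'_toMatrix' g)]
  exact hg

lemma rows_indep_of_surj {i a : ℕ} {T : Matrix (Fin i) (Fin a) F}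
    (h : Function.Surjective T.mulVecLin) : LinearIndependent F (fun r => T r) := by
  rw [show (fun r => T r) = T.row from rfl, ← Matrix.vecMul_injective_iff]
  intro g g' hgg
  funext j
  obtain ⟨s, hs⟩ := h (Pi.single j 1)
  have hgg' : g ᵥ* T = g' ᵥ* T := hgg
  have h1 : g ⬝ᵥ T.mulVec s = g' ⬝ᵥ T.mulVec s := by
    rw [Matrix.dotProduct_mulVec, Matrix.dotProduct_mulVec, hgg']
  rw [Matrix.mulVecLin_apply] at hs
  rw [hs, dotProduct_single, dotProduct_single, mul_one, mul_one] at h1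
  exact h1

end MatrixAux


namespace LFT

section KeyLemmas

variable {F : Type} [Field F] {ℓ m n : ℕ}

/-- The matrix relations tying an LFT of size `n` to a smaller one of size `i`. -/
def Rel (M : LFT F ℓ m n) {i : ℕ} (M' : LFT F ℓ m i) (T : Matrix (Fin i) (Fin n) F) : Prop :=
  M.C = M'.C * T ∧ T * M.A = M'.A * T ∧ T * M.B = M'.B ∧ M.D = M'.D

lemma Rel.obs {M : LFT F ℓ m n} {i : ℕ} {M' : LFT F ℓ m i} {T} (h : Rel M M' T) :
    ∀ k, M.C * M.A ^ k = M'.C * M'.A ^ k * T := by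
  intro k
  induction k with
  | zero =>
    rw [pow_zero, pow_zero, Matrix.mul_one, Matrix.mul_one]
    exact h.1
  | succ k ih =>
    calc M.C * M.A ^ (k + 1) = M.C * M.A ^ k * M.A := by rw [pow_succ, Matrix.mul_assoc]
      _ = M'.C * M'.A ^ k * T * M.A := by rw [ih]
      _ = M'.C * M'.A ^ k * (T * M.A) := by rw [Matrix.mul_assoc]
      _ = M'.C * M'.A ^ k * (M'.A * T) := by rw [h.2.1]
      _ = M'.C * M'.A ^ k * M'.A * T := (Matrix.mul_assoc _ _ _).symm
      _ = M'.C * M'.A ^ (k + 1) * T := by rw [pow_succ, Matrix.mul_assoc M'.C]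

lemma tdiag_comp (hm : 0 < m) {M : LFT F ℓ m n} {i : ℕ} {M' : LFT F ℓ m i}
    {T : Matrix (Fin i) (Fin n) F}
    (hobs : ∀ k, M.C * M.A ^ k = M'.C * M'.A ^ k * T) (s : Fin n → F) :
    M'.diagMat.mulVec (T.mulVec s) = (tdiag M i).mulVec s := by
  funext x
  rw [tdiag_n M']
  rw [tdiag_apply' hm, tdiag_apply' hm]
  rw [Matrix.mulVec_mulVec, ← hobs]

lemma diag_col {i : ℕ} (M' : LFT F ℓ m i) (j : Fin i) :
    M'.diagMat.mulVec (Pi.single j 1) = fun r => M'.diagMat r j := by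
  rw [Matrix.mulVec_single_one]
  rfl

lemma IsCanonical.diag_inj {i : ℕ} {M' : LFT F ℓ m i} (h : M'.IsCanonical) :
    ∀ y, M'.diagMat.mulVec y = 0 → y = 0 := by
  have h2 := Fintype.linearIndependent_iff.1 h.1
  intro y hy
  have hsum : ∑ j, y j • (fun r => M'.diagMat r j) = M'.diagMat.mulVec y := by
    funext r
    rw [Finset.sum_apply]
    simp only [Pi.smul_apply, smul_eq_mul]
    simp [Matrix.mulVec, dotProduct, mul_comm]
  funext j
  exact h2 y (by rw [hsum, hy]) j

lemma rk_eq_of_rel (hm : 0 < m) {i : ℕ} (hin : i ≤ n) {M : LFT F ℓ m n} {M' : LFT F ℓ m i}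
    {T : Matrix (Fin i) (Fin n) F} (hcan : M'.IsCanonical)
    (hT : LinearIndependent F (fun r => T r)) (hrel : Rel M M' T) : rk M = i := by
  have hobs := hrel.obs
  have hker : LinearMap.ker M.diagMat.mulVecLin = LinearMap.ker T.mulVecLin := by
    ext s
    rw [LinearMap.mem_ker, LinearMap.mem_ker, Matrix.mulVecLin_apply, Matrix.mulVecLin_apply]
    constructor
    · intro h
      have hNs : s ∈ Nsub M n := by
        have := (tdiag_mulVec_eq_zero_iff hm (M := M) (i := n) s).1 (by rw [← tdiag_n]; exact h)
        exact this
      have h1 : (tdiag M i).mulVec s = 0 := by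
        rw [tdiag_mulVec_eq_zero_iff hm]
        intro k hk
        exact hNs k (by omega)
      have h2 : M'.diagMat.mulVec (T.mulVec s) = 0 := by
        rw [tdiag_comp hm hobs s, h1]
      exact hcan.diag_inj _ h2
    · intro h
      have hNs : s ∈ Nsub M n := by
        intro k _
        rw [hobs k, ← Matrix.mulVec_mulVec, h, Matrix.mulVec_zero]
      rw [tdiag_n]
      exact (tdiag_mulVec_eq_zero_iff hm s).2 hNs
  have hrn1 := LinearMap.finrank_range_add_finrank_ker M.diagMat.mulVecLin
  have hrn2 := LinearMap.finrank_range_add_finrank_ker T.mulVecLin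
  rw [finrank_pi_n] at hrn1 hrn2
  have hTsurj := surj_of_rows_indep hT
  have hrangeT : LinearMap.range T.mulVecLin = ⊤ := LinearMap.range_eq_top.2 hTsurj
  rw [hrangeT, finrank_top, finrank_pi_n] at hrn2
  rw [hker] at hrn1
  show Module.finrank F (LinearMap.range M.diagMat.mulVecLin) = i
  omega

lemma rel_unique (hm : 0 < m) {i : ℕ} {M : LFT F ℓ m n}
    {Ma : LFT F ℓ m i} {Ta : Matrix (Fin i) (Fin n) F}
    {Mb : LFT F ℓ m i} {Tb : Matrix (Fin i) (Fin n) F}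
    (hca : Ma.IsCanonical) (hTa : LinearIndependent F (fun r => Ta r)) (hra : Rel M Ma Ta)
    (hcb : Mb.IsCanonical) (hTb : LinearIndependent F (fun r => Tb r)) (hrb : Rel M Mb Tb) :
    Ma = Mb ∧ Ta = Tb := by
  obtain ⟨pa, hpa0⟩ := hca.2
  obtain ⟨pb, hpb0⟩ := hcb.2
  have hpa : IsRREFwith pa (fun j => fun r => Ma.diagMat r j) := hpa0
  have hpb : IsRREFwith pb (fun j => fun r => Mb.diagMat r j) := hpb0
  have key : ∀ (Mx : LFT F ℓ m i) (Tx : Matrix (Fin i) (Fin n) F), Rel M Mx Tx →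
      LinearIndependent F (fun r => Tx r) →
      LinearMap.range Mx.diagMat.mulVecLin = LinearMap.range (tdiag M i).mulVecLin := by
    intro Mx Tx hrx hTx
    apply le_antisymm
    · rintro y ⟨z, rfl⟩
      obtain ⟨s, hs⟩ := surj_of_rows_indep hTx z
      refine ⟨s, ?_⟩
      rw [Matrix.mulVecLin_apply, Matrix.mulVecLin_apply, ← tdiag_comp hm hrx.obs s]
      rw [Matrix.mulVecLin_apply] at hs
      rw [hs]
    · rintro y ⟨s, rfl⟩
      refine ⟨Tx.mulVec s, ?_⟩
      rw [Matrix.mulVecLin_apply, Matrix.mulVecLin_apply, tdiag_comp hm hrx.obs s]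
  have hspaneq : Submodule.span F (Set.range (fun j => fun r => Ma.diagMat r j)) =
      Submodule.span F (Set.range (fun j => fun r => Mb.diagMat r j)) := by
    have h1 : Submodule.span F (Set.range (fun j => fun r => Ma.diagMat r j)) =
        LinearMap.range Ma.diagMat.mulVecLin := by
      rw [Matrix.range_mulVecLin]
      rfl
    have h2 : Submodule.span F (Set.range (fun j => fun r => Mb.diagMat r j)) =
        LinearMap.range Mb.diagMat.mulVecLin := by
      rw [Matrix.range_mulVecLin]
      rfl
    rw [h1, h2, key Ma Ta hra hTa, key Mb Tb hrb hTb]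
  obtain ⟨hpq, hcols⟩ := rref_unique hpa hpb hspaneq
  have hdiageq : Ma.diagMat = Mb.diagMat := by
    ext r j
    exact congrFun (congrFun hcols j) r
  have hTeq : Ta = Tb := by
    apply matrix_ext_mulVec
    intro v
    have h1 : Ma.diagMat.mulVec (Ta.mulVec v) = Mb.diagMat.mulVec (Tb.mulVec v) := by
      rw [tdiag_comp hm hra.obs v, tdiag_comp hm hrb.obs v]
    rw [← hdiageq] at h1
    have h2 : Ma.diagMat.mulVec (Ta.mulVec v - Tb.mulVec v) = 0 := by
      rw [Matrix.mulVec_sub, h1, sub_self]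
    exact sub_eq_zero.1 (hca.diag_inj _ h2)
  obtain ⟨R, hR⟩ := exists_rightInverse (surj_of_rows_indep hTa)
  have hcancel : ∀ (X Y : Matrix (Fin i) (Fin i) F), X * Ta = Y * Ta → X = Y := by
    intro X Y hXY
    calc X = X * (Ta * R) := by rw [hR, Matrix.mul_one]
      _ = (X * Ta) * R := by rw [Matrix.mul_assoc]
      _ = (Y * Ta) * R := by rw [hXY]
      _ = Y * (Ta * R) := by rw [Matrix.mul_assoc]
      _ = Y := by rw [hR, Matrix.mul_one]
  have hcancelC : ∀ (X Y : Matrix (Fin m) (Fin i) F), X * Ta = Y * Ta → X = Y := by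
    intro X Y hXY
    calc X = X * (Ta * R) := by rw [hR, Matrix.mul_one]
      _ = (X * Ta) * R := by rw [Matrix.mul_assoc]
      _ = (Y * Ta) * R := by rw [hXY]
      _ = Y * (Ta * R) := by rw [Matrix.mul_assoc]
      _ = Y := by rw [hR, Matrix.mul_one]
  have hAeq : Ma.A = Mb.A := by
    apply hcancel
    rw [← hra.2.1, hTeq, hrb.2.1]
  have hCeq : Ma.C = Mb.C := by
    apply hcancelC
    rw [← hra.1, hTeq, hrb.1]
  have hBeq : Ma.B = Mb.B := by
    rw [← hra.2.2.1, hTeq, hrb.2.2.1]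
  have hDeq : Ma.D = Mb.D := by
    rw [← hra.2.2.2, hrb.2.2.2]
  exact ⟨ext2 hAeq hBeq hCeq hDeq, hTeq⟩

lemma exists_rel (hm : 0 < m) (hn : 0 < n) (M : LFT F ℓ m n) :
    ∃ (M' : LFT F ℓ m (rk M)) (T : Matrix (Fin (rk M)) (Fin n) F),
      M'.IsCanonical ∧ LinearIndependent F (fun r => T r) ∧ Rel M M' T := by
  classical
  set i := rk M with hi
  set ψ := (tdiag M i).mulVecLin with hψ
  have hkerψ : LinearMap.ker ψ = Nsub M n := by
    rw [hψ, ker_tdiag hm, hi]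
    exact Nsub_rk hm M
  have hfrU : Module.finrank F (LinearMap.range ψ) = i := by
    have h1 := LinearMap.finrank_range_add_finrank_ker ψ
    rw [finrank_pi_n, hkerψ] at h1
    have h2 := rk_add hm M
    omega
  obtain ⟨p, b, hb, hspan⟩ := rref_exists (i * m) i (LinearMap.range ψ) hfrU
  set T : Matrix (Fin i) (Fin n) F := Matrix.of (fun j c => tdiag M i (p j) c) with hT
  have hTmul : ∀ (s : Fin n → F) j, T.mulVec s j = ψ s (p j) := by
    intro s j
    rfl
  have hmemspan : ∀ s, ψ s ∈ Submodule.span F (Set.range b) := by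
    intro s
    rw [hspan]
    exact LinearMap.mem_range_self ψ s
  have hexp : ∀ s, ψ s = ∑ j, (T.mulVec s j) • b j := by
    intro s
    have h := hb.expand (hmemspan s)
    simp_rw [hTmul]
    exact h
  have hpre : ∀ j, ∃ s, ψ s = b j := by
    intro j
    have hmem : b j ∈ LinearMap.range ψ := by
      rw [← hspan]
      exact Submodule.subset_span (Set.mem_range_self j)
    exact hmem
  have hTs : ∀ j s, ψ s = b j → T.mulVec s = Pi.single j 1 := by
    intro j s hs
    funext j'
    rw [hTmul, hs, hb.2.1 j' j]
    by_cases h : j = j'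
    · subst h
      simp
    · simp [h, Ne.symm h]
  have hTsurj : Function.Surjective T.mulVecLin := by
    intro y
    have hmem : (∑ j, y j • b j) ∈ LinearMap.range ψ := by
      rw [← hspan]
      exact Submodule.sum_mem _
        (fun j _ => Submodule.smul_mem _ _ (Submodule.subset_span (Set.mem_range_self j)))
    obtain ⟨s, hs⟩ := hmem
    refine ⟨s, ?_⟩
    show T.mulVec s = y
    funext j
    rw [hTmul, hs]
    rw [Finset.sum_apply]
    simp only [Pi.smul_apply, smul_eq_mul]
    have hval : ∀ j', b j' (p j) = if j' = j then 1 else 0 := fun j' => hb.2.1 j j'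
    simp_rw [hval]
    simp [Finset.sum_ite_eq']
  have hTker : ∀ s, ψ s = 0 → T.mulVec s = 0 := by
    intro s hs
    funext j
    rw [hTmul, hs]
    rfl
  have hkerT : ∀ s, T.mulVec s = 0 → ψ s = 0 := by
    intro s h0
    rw [hexp s]
    apply Finset.sum_eq_zero
    intro j _
    rw [congrFun h0 j]
    simp
  obtain ⟨R, hR⟩ := exists_rightInverse hTsurj
  have hRT : ∀ v : Fin n → F, T.mulVec (R.mulVec (T.mulVec v)) = T.mulVec v := by
    intro v
    rw [Matrix.mulVec_mulVec, hR, Matrix.one_mulVec]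
  have hdiff : ∀ v : Fin n → F, ψ (R.mulVec (T.mulVec v) - v) = 0 := by
    intro v
    apply hkerT
    rw [Matrix.mulVec_sub, hRT, sub_self]
  have hmemN : ∀ d : Fin n → F, ψ d = 0 → d ∈ Nsub M n := by
    intro d hd
    rw [← hkerψ]
    exact hd
  have hCker : ∀ d : Fin n → F, ψ d = 0 → M.C.mulVec d = 0 := by
    intro d hd
    have h0 := hmemN d hd 0 hn
    rwa [pow_zero, Matrix.mul_one] at h0
  have hAker : ∀ d : Fin n → F, ψ d = 0 → ψ (M.A.mulVec d) = 0 := by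
    intro d hd
    have hN : M.A.mulVec d ∈ Nsub M n := Nsub_inv M (hmemN d hd)
    show M.A.mulVec d ∈ LinearMap.ker ψ
    rw [hkerψ]
    exact hN
  set M' : LFT F ℓ m i := ⟨T * M.A * R, T * M.B, M.C * R, M.D⟩ with hM'
  have hrel : Rel M M' T := by
    refine ⟨?_, ?_, rfl, rfl⟩
    · -- M.C = (M.C * R) * T
      apply matrix_ext_mulVec
      intro v
      show M.C.mulVec v = (M.C * R * T).mulVec v
      have hd := hCker _ (hdiff v)
      rw [Matrix.mulVec_sub, sub_eq_zero] at hd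
      rw [← Matrix.mulVec_mulVec, ← Matrix.mulVec_mulVec]
      exact hd.symm
    · -- T * M.A = (T * M.A * R) * T
      apply matrix_ext_mulVec
      intro v
      show (T * M.A).mulVec v = (T * M.A * R * T).mulVec v
      have hTd := hTker _ (hAker _ (hdiff v))
      rw [Matrix.mulVec_sub, Matrix.mulVec_sub, sub_eq_zero] at hTd
      rw [← Matrix.mulVec_mulVec, ← Matrix.mulVec_mulVec, ← Matrix.mulVec_mulVec,
        ← Matrix.mulVec_mulVec]
      exact hTd.symm
  have hcomp : ∀ s, M'.diagMat.mulVec (T.mulVec s) = ψ s := tdiag_comp hm hrel.obs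
  have hcols : (fun j => fun r => M'.diagMat r j) = b := by
    funext j
    obtain ⟨s, hs⟩ := hpre j
    have h1 : T.mulVec s = Pi.single j 1 := hTs j s hs
    have h2 : M'.diagMat.mulVec (Pi.single j 1) = b j := by
      rw [← h1, hcomp s, hs]
    rw [← diag_col]
    exact h2
  have hcan : M'.IsCanonical := by
    constructor
    · rw [hcols]
      exact hb.linearIndependent
    · show ∃ q, IsRREFwith q (fun j => fun r => M'.diagMat r j)
      rw [hcols]
      exact ⟨p, hb⟩
  exact ⟨M', T, hcan, rows_indep_of_surj hTsurj, hrel⟩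

end KeyLemmas

end LFT


section Counting

open LFT

variable {ℓ m n : ℕ}

lemma card_matrix (a b : ℕ) : Nat.card (Matrix (Fin a) (Fin b) (ZMod 2)) = 2 ^ (a * b) := by
  have h : Nat.card (Matrix (Fin a) (Fin b) (ZMod 2)) =
      Nat.card (Fin a → Fin b → ZMod 2) := rfl
  rw [h, Nat.card_eq_fintype_card, Fintype.card_fun, Fintype.card_fun, ZMod.card,
    Fintype.card_fin, Fintype.card_fin, ← pow_mul, Nat.mul_comm b a]

lemma card_LFT : Nat.card (LFT (ZMod 2) ℓ m n) = 2 ^ (m * ℓ + n * (ℓ + m + n)) := by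
  rw [Nat.card_congr (equivProd (F := ZMod 2) (ℓ := ℓ) (m := m) (n := n))]
  rw [Nat.card_prod, Nat.card_prod, Nat.card_prod, card_matrix, card_matrix, card_matrix,
    card_matrix, ← pow_add, ← pow_add, ← pow_add]
  congr 1
  ring

lemma card_partition :
    Nat.card (LFT (ZMod 2) ℓ m n) =
      ∑ i ∈ Finset.range (n + 1), Nat.card {M : LFT (ZMod 2) ℓ m n // M.rk = i} := by
  classical
  letI : Fintype (LFT (ZMod 2) ℓ m n) := Fintype.ofFinite _
  rw [Nat.card_eq_fintype_card, ← Finset.card_univ]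
  rw [Finset.card_eq_sum_card_fiberwise (f := fun M : LFT (ZMod 2) ℓ m n => M.rk)
    (t := Finset.range (n + 1)) ?hmem]
  · apply Finset.sum_congr rfl
    intro i _
    rw [Nat.card_eq_fintype_card, Fintype.card_subtype]
  · intro M _
    rw [Finset.mem_coe, Finset.mem_range]
    have h := LinearMap.finrank_range_add_finrank_ker M.diagMat.mulVecLin
    rw [finrank_pi_n] at h
    show M.rk < n + 1
    have : M.rk = Module.finrank (ZMod 2)
        (LinearMap.range M.diagMat.mulVecLin) := rfl
    omega

lemma rk_zero_iff {F : Type} [Field F] (hm : 0 < m) (hn : 0 < n) (M : LFT F ℓ m n) :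
    M.rk = 0 ↔ M.C = 0 := by
  constructor
  · intro h
    have hbot : LinearMap.range M.diagMat.mulVecLin = ⊥ := Submodule.finrank_eq_zero.1 h
    apply matrix_ext_mulVec
    intro v
    have hmem : M.diagMat.mulVec v ∈ LinearMap.range M.diagMat.mulVecLin :=
      LinearMap.mem_range_self _ v
    rw [hbot, Submodule.mem_bot] at hmem
    have hNs : v ∈ Nsub M n := by
      have := (tdiag_mulVec_eq_zero_iff hm (M := M) (i := n) v).1 (by rw [← tdiag_n]; exact hmem)
      exact this
    have h0 := hNs 0 hn
    rw [pow_zero, Matrix.mul_one] at h0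
    rw [h0, Matrix.zero_mulVec]
  · intro h
    have hN : Nsub M n = ⊤ := by
      apply eq_top_iff.2
      intro s _ k _
      rw [h, Matrix.zero_mul, Matrix.zero_mulVec]
    have h2 := rk_add hm M
    rw [hN, finrank_top, finrank_pi_n] at h2
    omega

/-- The trivial class. -/
def zeroEquiv : {M : LFT (ZMod 2) ℓ m n // M.C = 0} ≃
    Matrix (Fin n) (Fin n) (ZMod 2) × Matrix (Fin n) (Fin ℓ) (ZMod 2) ×
      Matrix (Fin m) (Fin ℓ) (ZMod 2) where
  toFun M := (M.1.A, M.1.B, M.1.D)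
  invFun x := ⟨⟨x.1, x.2.1, 0, x.2.2⟩, rfl⟩
  left_inv := fun ⟨M, hM⟩ => Subtype.ext (LFT.ext2 rfl rfl hM.symm rfl)
  right_inv := fun _ => rfl

lemma card_zero_class (hm : 0 < m) (hn : 0 < n) :
    Nat.card {M : LFT (ZMod 2) ℓ m n // M.rk = 0} = 2 ^ (n ^ 2 + ℓ * (m + n)) := by
  have hequiv : {M : LFT (ZMod 2) ℓ m n // M.rk = 0} ≃ {M : LFT (ZMod 2) ℓ m n // M.C = 0} :=
    Equiv.subtypeEquivRight (fun M => rk_zero_iff hm hn M)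
  rw [Nat.card_congr hequiv, Nat.card_congr (zeroEquiv (ℓ := ℓ) (m := m) (n := n)),
    Nat.card_prod, Nat.card_prod, card_matrix, card_matrix, card_matrix,
    ← pow_add, ← pow_add]
  congr 1
  ring

/-- Left-multiplication by a fixed matrix, as a linear map. -/
def lmulLeft {i a c : ℕ} (T : Matrix (Fin i) (Fin a) (ZMod 2)) :
    Matrix (Fin a) (Fin c) (ZMod 2) →ₗ[ZMod 2] Matrix (Fin i) (Fin c) (ZMod 2) where
  toFun X := T * X
  map_add' X Y := Matrix.mul_add T X Y
  map_smul' r X := Matrix.mul_smul T r X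

lemma card_fiber {i a c : ℕ} (T : Matrix (Fin i) (Fin a) (ZMod 2))
    (hT : Function.Surjective T.mulVecLin) (Z : Matrix (Fin i) (Fin c) (ZMod 2)) :
    Nat.card {X : Matrix (Fin a) (Fin c) (ZMod 2) // T * X = Z} = 2 ^ ((a - i) * c) := by
  classical
  obtain ⟨R, hR⟩ := exists_rightInverse hT
  set φ : Matrix (Fin a) (Fin c) (ZMod 2) →ₗ[ZMod 2] Matrix (Fin i) (Fin c) (ZMod 2) :=
    lmulLeft T with hφ
  have hφapp : ∀ X, φ X = T * X := fun _ => rfl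
  have hφsurj : Function.Surjective φ := by
    intro Z'
    exact ⟨R * Z', by rw [hφapp, ← Matrix.mul_assoc, hR, Matrix.one_mul]⟩
  set X₀ : Matrix (Fin a) (Fin c) (ZMod 2) := R * Z with hX₀
  have hX₀eq : T * X₀ = Z := by rw [hX₀, ← Matrix.mul_assoc, hR, Matrix.one_mul]
  have hequiv : {X : Matrix (Fin a) (Fin c) (ZMod 2) // T * X = Z} ≃ LinearMap.ker φ :=
    { toFun := fun X => ⟨X.1 - X₀, by
        rw [LinearMap.mem_ker, map_sub, hφapp, hφapp, X.2, hX₀eq, sub_self]⟩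
      invFun := fun K => ⟨K.1 + X₀, by
        have hK := K.2
        rw [LinearMap.mem_ker, hφapp] at hK
        rw [Matrix.mul_add, hK, hX₀eq, zero_add]⟩
      left_inv := fun X => Subtype.ext (by simp)
      right_inv := fun K => Subtype.ext (by simp) }
  rw [Nat.card_congr hequiv, Nat.card_eq_fintype_card]
  rw [Module.card_eq_pow_finrank (K := ZMod 2) (V := LinearMap.ker φ), ZMod.card]
  congr 1
  have hrn := LinearMap.finrank_range_add_finrank_ker φ
  have hrange : LinearMap.range φ = ⊤ := LinearMap.range_eq_top.2 hφsurj
  rw [hrange, finrank_top] at hrn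
  rw [Module.finrank_matrix, Module.finrank_matrix, Module.finrank_self, Nat.mul_one,
    Nat.mul_one] at hrn
  simp only [Fintype.card_fin] at hrn
  rw [Nat.sub_mul]
  omega

lemma card_fullrank (i a : ℕ) (hia : i ≤ a) :
    Nat.card {T : Matrix (Fin i) (Fin a) (ZMod 2) //
        LinearIndependent (ZMod 2) (fun r => T r)} =
      ∏ j ∈ Finset.range i, (2 ^ a - 2 ^ j) := by
  have hk : i ≤ Module.finrank (ZMod 2) (Fin a → ZMod 2) := by
    rw [finrank_pi_n]
    exact hia
  have h := card_linearIndependent (K := ZMod 2) (V := Fin a → ZMod 2) hk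
  have hequiv : {T : Matrix (Fin i) (Fin a) (ZMod 2) //
      LinearIndependent (ZMod 2) (fun r => T r)} ≃
      {s : Fin i → (Fin a → ZMod 2) // LinearIndependent (ZMod 2) s} :=
    { toFun := fun T => ⟨fun r => T.1 r, T.2⟩
      invFun := fun s => ⟨Matrix.of s.1, s.2⟩
      left_inv := fun _ => rfl
      right_inv := fun _ => rfl }
  rw [Nat.card_congr hequiv, h, ZMod.card, finrank_pi_n]
  rw [← Fin.prod_univ_eq_prod_range (fun j => 2 ^ a - 2 ^ j) i]

end Counting


section ClassCount

open LFT

variable {ℓ m n : ℕ}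

lemma exists_rel' {F : Type} [Field F] {ℓ m n : ℕ} (hm : 0 < m) (hn : 0 < n) {i : ℕ}
    (M : LFT F ℓ m n) (hi : M.rk = i) :
    ∃ (M' : LFT F ℓ m i) (T : Matrix (Fin i) (Fin n) F),
      M'.IsCanonical ∧ LinearIndependent F (fun r => T r) ∧ M.Rel M' T := by
  subst hi
  exact exists_rel hm hn M

abbrev Pairs (ℓ m n i : ℕ) : Type :=
  {y : LFT (ZMod 2) ℓ m i × Matrix (Fin i) (Fin n) (ZMod 2) //
    y.1.IsCanonical ∧ LinearIndependent (ZMod 2) (fun r => y.2 r)}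

abbrev ClassSpace (ℓ m n i : ℕ) : Type :=
  Σ y : Pairs ℓ m n i,
    {A : Matrix (Fin n) (Fin n) (ZMod 2) // y.1.2 * A = y.1.1.A * y.1.2} ×
    {B : Matrix (Fin n) (Fin ℓ) (ZMod 2) // y.1.2 * B = y.1.1.B}

def classMap {i : ℕ} (x : ClassSpace ℓ m n i) : LFT (ZMod 2) ℓ m n :=
  ⟨x.2.1.1, x.2.2.1, x.1.1.1.C * x.1.1.2, x.1.1.1.D⟩

lemma classMap_rel {i : ℕ} (x : ClassSpace ℓ m n i) : (classMap x).Rel x.1.1.1 x.1.1.2 :=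
  ⟨rfl, x.2.1.2, x.2.2.2, rfl⟩

lemma classMap_rk (hm : 0 < m) {i : ℕ} (hin : i ≤ n) (x : ClassSpace ℓ m n i) :
    (classMap x).rk = i :=
  rk_eq_of_rel hm hin x.1.2.1 x.1.2.2 (classMap_rel x)

lemma classMap_bij (hm : 0 < m) (hn : 0 < n) {i : ℕ} (hin : i ≤ n) :
    Function.Bijective (fun x : ClassSpace ℓ m n i =>
      (⟨classMap x, classMap_rk hm hin x⟩ : {M : LFT (ZMod 2) ℓ m n // M.rk = i})) := by
  constructor
  · rintro ⟨⟨⟨Ma, Ta⟩, hya⟩, ⟨Aa, hAa⟩, ⟨Ba, hBa⟩⟩ ⟨⟨⟨Mb, Tb⟩, hyb⟩, ⟨Ab, hAb⟩, ⟨Bb, hBb⟩⟩ heq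
    have hM : classMap (⟨⟨(Ma, Ta), hya⟩, ⟨Aa, hAa⟩, ⟨Ba, hBa⟩⟩ : ClassSpace ℓ m n i) =
        classMap ⟨⟨(Mb, Tb), hyb⟩, ⟨Ab, hAb⟩, ⟨Bb, hBb⟩⟩ := congrArg Subtype.val heq
    have hA : Aa = Ab := congrArg LFT.A hM
    have hB : Ba = Bb := congrArg LFT.B hM
    have hrela : (classMap (⟨⟨(Ma, Ta), hya⟩, ⟨Aa, hAa⟩, ⟨Ba, hBa⟩⟩ :
        ClassSpace ℓ m n i)).Rel Ma Ta := classMap_rel _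
    have hrelb : (classMap (⟨⟨(Ma, Ta), hya⟩, ⟨Aa, hAa⟩, ⟨Ba, hBa⟩⟩ :
        ClassSpace ℓ m n i)).Rel Mb Tb := by
      rw [hM]
      exact classMap_rel _
    obtain ⟨hMeq, hTeq⟩ := rel_unique hm hya.1 hya.2 hrela hyb.1 hyb.2 hrelb
    subst hA
    subst hB
    subst hMeq
    subst hTeq
    rfl
  · rintro ⟨M, hM⟩
    obtain ⟨M', T, hcan, hind, hrel⟩ := exists_rel' hm hn M hM
    refine ⟨⟨⟨(M', T), hcan, hind⟩, ⟨M.A, hrel.2.1⟩, ⟨M.B, hrel.2.2.1⟩⟩, ?_⟩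
    apply Subtype.ext
    exact LFT.ext2 rfl rfl hrel.1.symm hrel.2.2.2.symm

lemma card_pairs {i : ℕ} (hin : i ≤ n) :
    Nat.card (Pairs ℓ m n i) = CT ℓ m i * ∏ j ∈ Finset.range i, (2 ^ n - 2 ^ j) := by
  rw [Nat.card_congr (Equiv.subtypeProdEquivProd
    (p := fun M' : LFT (ZMod 2) ℓ m i => M'.IsCanonical)
    (q := fun T : Matrix (Fin i) (Fin n) (ZMod 2) => LinearIndependent (ZMod 2) (fun r => T r)))]
  rw [Nat.card_prod, card_fullrank i n hin]
  rfl

lemma card_class (hm : 0 < m) (hn : 0 < n) {i : ℕ} (hin : i ≤ n) :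
    Nat.card {M : LFT (ZMod 2) ℓ m n // M.rk = i} =
      CT ℓ m i * ((∏ j ∈ Finset.range i, (2 ^ n - 2 ^ j)) * 2 ^ ((n + ℓ) * (n - i))) := by
  classical
  rw [← Nat.card_congr (Equiv.ofBijective _ (classMap_bij hm hn hin))]
  letI : Fintype (Pairs ℓ m n i) := Fintype.ofFinite _
  letI : ∀ y : Pairs ℓ m n i, Fintype
      ({A : Matrix (Fin n) (Fin n) (ZMod 2) // y.1.2 * A = y.1.1.A * y.1.2} ×
       {B : Matrix (Fin n) (Fin ℓ) (ZMod 2) // y.1.2 * B = y.1.1.B}) :=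
    fun y => Fintype.ofFinite _
  rw [Nat.card_eq_fintype_card, Fintype.card_sigma]
  have hterm : ∀ y : Pairs ℓ m n i, Fintype.card
      ({A : Matrix (Fin n) (Fin n) (ZMod 2) // y.1.2 * A = y.1.1.A * y.1.2} ×
       {B : Matrix (Fin n) (Fin ℓ) (ZMod 2) // y.1.2 * B = y.1.1.B}) =
      2 ^ ((n + ℓ) * (n - i)) := by
    intro y
    have hsurj : Function.Surjective (y.1.2).mulVecLin := surj_of_rows_indep y.2.2
    rw [← Nat.card_eq_fintype_card, Nat.card_prod,
      card_fiber y.1.2 hsurj (y.1.1.A * y.1.2), card_fiber y.1.2 hsurj y.1.1.B,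
      ← pow_add]
    congr 1
    have hd : (n - i) * n + (n - i) * ℓ = (n - i) * (n + ℓ) := by ring
    rw [hd, Nat.mul_comm]
  rw [Finset.sum_congr rfl (fun y _ => hterm y), Finset.sum_const, Finset.card_univ,
    ← Nat.card_eq_fintype_card, card_pairs hin, smul_eq_mul, Nat.mul_assoc]

lemma sum_Icc_one (f : ℕ → ℕ) (n : ℕ) :
    ∑ i ∈ Finset.Icc 1 n, f i = ∑ j ∈ Finset.range n, f (j + 1) := by
  induction n with
  | zero =>
    rw [Finset.range_zero, Finset.sum_empty, Finset.Icc_eq_empty (by omega), Finset.sum_empty]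
  | succ n ih =>
    rw [Finset.sum_Icc_succ_top (by omega), ih, Finset.sum_range_succ]

end ClassCount

/-- the total number `2^{mℓ+n(ℓ+m+n)}` of LFTs over `F₂` with structural
parameters `ℓ, m, n` equals the number `2^{n²+ℓ(m+n)}` of trivial ones plus
`Σ_{i=1}^{n} CT(ℓ,m,i) · ∏_{j=0}^{i−1}(2ⁿ − 2^j) · 2^{(n+ℓ)(n−i)}`. -/
theorem total_count_decomposition (ℓ m n : ℕ) (hℓ : 0 < ℓ) (hm : 0 < m) (hn : 0 < n) :
    2 ^ (m * ℓ + n * (ℓ + m + n)) =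
      2 ^ (n ^ 2 + ℓ * (m + n)) +
        ∑ i ∈ Finset.Icc 1 n,
          CT ℓ m i * ((∏ j ∈ Finset.range i, (2 ^ n - 2 ^ j)) * 2 ^ ((n + ℓ) * (n - i))) := by
  have h1 := card_LFT (ℓ := ℓ) (m := m) (n := n)
  have h2 := card_partition (ℓ := ℓ) (m := m) (n := n)
  rw [Finset.sum_range_succ'] at h2
  have h0 := card_zero_class (ℓ := ℓ) hm hn
  have hterm : ∀ j ∈ Finset.range n,
      Nat.card {M : LFT (ZMod 2) ℓ m n // M.rk = j + 1} =
      CT ℓ m (j + 1) * ((∏ k ∈ Finset.range (j + 1), (2 ^ n - 2 ^ k)) *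
        2 ^ ((n + ℓ) * (n - (j + 1)))) := by
    intro j hj
    rw [Finset.mem_range] at hj
    exact card_class hm hn (by omega)
  rw [Finset.sum_congr rfl hterm, h0] at h2
  rw [sum_Icc_one (fun i => CT ℓ m i * ((∏ j ∈ Finset.range i, (2 ^ n - 2 ^ j)) *
    2 ^ ((n + ℓ) * (n - i)))) n]
  rw [← h1, h2]
  omega
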